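/- arXiv:2104.02451 — 3 statements merged into one kernel-verified Lean document; each statement's English description precedes it below -/
import Mathlib

section
/- Let N ≥ 3, Ω ⊂ ℝ^N a bounded open set with d(x) = dist(x, ∂Ω), let −1 < β ≤ 0, and let G : Ω × Ω → [0,∞) satisfy G(x,y) ≤ C min{1, d(x)d(y)/|x−y|^2} |x−y|^{2−N} for all x ≠ y in Ω. Then there exists a constant c = c(β, C, N, diam Ω) > 0 such that for every x ∈ Ω, ∫_{{y ∈ Ω : d(y) ≥ 2|x−y|}} G(x,y) d(y)^β dy ≤ c · d(x). -/
open MeasureTheory Metric Set Measure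


lemma aux_ball_rpow (N : ℕ) (hN : 3 ≤ N) (a : ℝ) (haN : -(N:ℝ) < a) (ha : a < 0) :
    ∃ K > 0, ∀ R : ℝ, 0 < R →
      IntegrableOn (fun y : EuclideanSpace ℝ (Fin N) => ‖y‖ ^ a) (Metric.ball 0 R) volume ∧
      ∫ y in Metric.ball (0 : EuclideanSpace ℝ (Fin N)) R, ‖y‖ ^ a ≤ K * R ^ ((N:ℝ) + a) := by
  set E := EuclideanSpace ℝ (Fin N)
  haveI : Nonempty (Fin N) := ⟨⟨0, by omega⟩⟩
  haveI : Nontrivial E := by infer_instance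
  have hdim : Module.finrank ℝ E = N := finrank_euclideanSpace_fin
  have hNa : (0:ℝ) < (N:ℝ) + a := by linarith
  set K0 : ℝ := (N : ℝ) * (volume (Metric.ball (0:E) 1)).toReal * ((N:ℝ) + a)⁻¹ with hK0
  have hK0nn : 0 ≤ K0 := by positivity
  refine ⟨K0 + 1, by positivity, fun R hR => ?_⟩
  set f : ℝ → ℝ := (Set.Ioo (0:ℝ) R).indicator (fun r => r ^ a) with hf
  have hf_eq : ∀ y : E, (Metric.ball (0:E) R).indicator (fun y => ‖y‖ ^ a) y = f ‖y‖ := by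
    intro y
    rcases eq_or_ne y 0 with rfl | hy
    · simp [hf, Set.indicator_apply, Real.zero_rpow ha.ne, hR, mem_ball_zero_iff]
    · have hy' : 0 < ‖y‖ := norm_pos_iff.2 hy
      simp only [hf, Set.indicator_apply, mem_ball_zero_iff, Set.mem_Ioo]
      by_cases hyR : ‖y‖ < R <;> simp [hyR, hy']
  have hcast : ((N - 1 : ℕ) : ℝ) = (N : ℝ) - 1 := by
    have : (1:ℕ) ≤ N := by omega
    push_cast [Nat.cast_sub this]
    ring
  -- 1D integrability
  have h2 : IntegrableOn (fun r : ℝ => r ^ a * r ^ (N-1:ℕ)) (Set.Ioo 0 R) volume := by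
    have h1 : IntegrableOn (fun r : ℝ => r ^ (a + (N-1:ℕ))) (Set.Ioo 0 R) volume :=
      ((intervalIntegral.intervalIntegrable_rpow' (by rw [hcast]; push_cast; linarith)).1).mono_set
        Set.Ioo_subset_Ioc_self
    exact h1.congr_fun (fun r hr => by
      beta_reduce; rw [Real.rpow_add hr.1, Real.rpow_natCast]) measurableSet_Ioo
  have h4 : IntegrableOn (fun r : ℝ => f r * r ^ (N-1:ℕ)) (Set.Ioi 0) volume := by
    have : (fun r : ℝ => f r * r ^ (N-1:ℕ))
        = (Set.Ioo (0:ℝ) R).indicator (fun r => r ^ a * r ^ (N-1:ℕ)) := by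
      funext r
      by_cases hr : r ∈ Set.Ioo (0:ℝ) R <;>
        simp [hf, Set.indicator, hr]
    rw [this]
    exact ((integrable_indicator_iff measurableSet_Ioo).2 h2).integrableOn
  have h5 : Integrable (fun r : Set.Ioi (0:ℝ) => f r * (r:ℝ) ^ (N-1:ℕ))
      (Measure.comap Subtype.val volume) := by
    have hmap : Integrable (fun r : ℝ => f r * r ^ (N-1:ℕ))
        (((volume : Measure ℝ).comap Subtype.val).map
          (Subtype.val : Set.Ioi (0:ℝ) → ℝ)) := by
      rw [map_comap_subtype_coe measurableSet_Ioi]; exact h4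
    exact ((MeasurableEmbedding.subtype_coe measurableSet_Ioi).integrable_map_iff).1 hmap
  have h6 : Integrable (fun r : Set.Ioi (0:ℝ) => f r) (Measure.volumeIoiPow (N-1)) := by
    rw [Measure.volumeIoiPow, integrable_withDensity_iff
      (by exact (measurable_subtype_coe.pow_const _).ennreal_ofReal)
      (Filter.Eventually.of_forall fun _ => ENNReal.ofReal_lt_top)]
    refine h5.congr (Filter.Eventually.of_forall fun r => ?_)
    simp only []
    rw [ENNReal.toReal_ofReal (pow_nonneg (le_of_lt r.2) (N-1))]
  have h7 : Integrable (fun p : Metric.sphere (0:E) 1 × Set.Ioi (0:ℝ) => f p.2)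
      ((volume : Measure E).toSphere.prod (Measure.volumeIoiPow (N-1))) := by
    simpa using Integrable.smul_prod (integrable_const (1:ℝ)) h6
  have h8 : Integrable (fun y : E => f ‖y‖) volume := by
    have hmp := (volume : Measure E).measurePreserving_homeomorphUnitSphereProd
    rw [hdim] at hmp
    have h9 := (hmp.integrable_comp_emb (Homeomorph.measurableEmbedding _)).2 h7
    have h10 : Integrable (fun y : E => f ‖y‖)
        (((volume : Measure E).comap Subtype.val).map
          (Subtype.val : ({(0:E)}ᶜ : Set E) → E)) :=
      ((MeasurableEmbedding.subtype_coe (measurableSet_singleton (0:E)).compl).integrable_map_iff).2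
        (h9.congr (Filter.Eventually.of_forall fun y => by simp))
    rwa [map_comap_subtype_coe (measurableSet_singleton (0:E)).compl,
      restrict_compl_singleton] at h10
  have hint : IntegrableOn (fun y : E => ‖y‖ ^ a) (Metric.ball 0 R) volume := by
    rw [← integrable_indicator_iff measurableSet_ball]
    exact h8.congr (Filter.Eventually.of_forall fun y => (hf_eq y).symm)
  refine ⟨hint, ?_⟩
  -- value computation
  have hval : ∫ y in Metric.ball (0 : E) R, ‖y‖ ^ a = K0 * R ^ ((N:ℝ) + a) := by
    rw [← integral_indicator measurableSet_ball]
    calc ∫ y : E, (Metric.ball (0:E) R).indicator (fun y => ‖y‖ ^ a) y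
        = ∫ y : E, f ‖y‖ := by exact integral_congr_ae (Filter.Eventually.of_forall hf_eq)
      _ = (Module.finrank ℝ E) •
          ((volume : Measure E) (Metric.ball 0 1)).toReal •
          ∫ r in Set.Ioi (0:ℝ), r ^ (Module.finrank ℝ E - 1) • f r :=
        integral_fun_norm_addHaar (volume : Measure E) f
      _ = K0 * R ^ ((N:ℝ) + a) := by
        rw [hdim]
        have : ∫ r in Set.Ioi (0:ℝ), r ^ (N - 1) • f r = R ^ ((N:ℝ) + a) / ((N:ℝ) + a) := by
          have e1 : ∀ r : ℝ, r ^ (N-1:ℕ) • f r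
              = (Set.Ioo (0:ℝ) R).indicator (fun r => r ^ ((N:ℝ) - 1 + a)) r := by
            intro r
            by_cases hr : r ∈ Set.Ioo (0:ℝ) R
            · simp only [hf, Set.indicator_of_mem hr, smul_eq_mul]
              rw [Real.rpow_add hr.1, ← Real.rpow_natCast r (N-1), hcast, mul_comm]
            · simp [hf, Set.indicator_of_notMem hr]
          simp_rw [e1]
          rw [integral_indicator measurableSet_Ioo, Measure.restrict_restrict measurableSet_Ioo,
            Set.inter_eq_left.2 (fun r hr => hr.1)]
          rw [← integral_Ioc_eq_integral_Ioo, ← intervalIntegral.integral_of_le hR.le,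
            integral_rpow (Or.inl (by push_cast; linarith))]
          rw [Real.zero_rpow (by push_cast; intro h; linarith [h]; )]
          ring_nf
        rw [this, hK0, nsmul_eq_mul, smul_eq_mul]
        ring
  rw [hval]
  have : (0:ℝ) ≤ R ^ ((N:ℝ) + a) := Real.rpow_nonneg hR.le _
  nlinarith


lemma aux_ball_rpow_center (N : ℕ) (hN : 3 ≤ N) (a : ℝ) (haN : -(N:ℝ) < a) (ha : a < 0) :
    ∃ K > 0, ∀ (x : EuclideanSpace ℝ (Fin N)) (R : ℝ), 0 < R →
      IntegrableOn (fun y : EuclideanSpace ℝ (Fin N) => dist x y ^ a) (Metric.ball x R) volume ∧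
      ∫ y in Metric.ball x R, dist x y ^ a ≤ K * R ^ ((N:ℝ) + a) := by
  obtain ⟨K, hKpos, hK⟩ := aux_ball_rpow N hN a haN ha
  refine ⟨K, hKpos, fun x R hR => ?_⟩
  obtain ⟨hint, hle⟩ := hK R hR
  have hind : ∀ y : EuclideanSpace ℝ (Fin N),
      (Metric.ball (0 : EuclideanSpace ℝ (Fin N)) R).indicator (fun z => ‖z‖ ^ a) (y - x)
        = (Metric.ball x R).indicator (fun y => dist x y ^ a) y := by
    intro y
    have hmem : (y - x ∈ Metric.ball (0 : EuclideanSpace ℝ (Fin N)) R) ↔ y ∈ Metric.ball x R := by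
      simp [mem_ball_zero_iff, Metric.mem_ball, dist_eq_norm]
    have hval : ‖y - x‖ ^ a = dist x y ^ a := by rw [dist_eq_norm, norm_sub_rev]
    by_cases hy : y ∈ Metric.ball x R
    · rw [Set.indicator_of_mem (hmem.2 hy), Set.indicator_of_mem hy, hval]
    · rw [Set.indicator_of_notMem (fun h => hy (hmem.1 h)), Set.indicator_of_notMem hy]
  have h1 : Integrable ((Metric.ball (0 : EuclideanSpace ℝ (Fin N)) R).indicator
      (fun z => ‖z‖ ^ a)) volume := (integrable_indicator_iff measurableSet_ball).2 hint
  have h2 := h1.comp_sub_right x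
  constructor
  · rw [← integrable_indicator_iff measurableSet_ball]
    exact h2.congr (Filter.Eventually.of_forall hind)
  · have : ∫ y in Metric.ball x R, dist x y ^ a
        = ∫ z in Metric.ball (0 : EuclideanSpace ℝ (Fin N)) R, ‖z‖ ^ a := by
      rw [← integral_indicator measurableSet_ball, ← integral_indicator measurableSet_ball]
      rw [← integral_sub_right_eq_self
        ((Metric.ball (0 : EuclideanSpace ℝ (Fin N)) R).indicator (fun z => ‖z‖ ^ a)) x]
      exact integral_congr_ae (Filter.Eventually.of_forall fun y => (hind y).symm)
    rw [this]; exact hle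

theorem stmt6 {N : ℕ} (hN : 3 ≤ N) (Ω : Set (EuclideanSpace ℝ (Fin N)))
    (hΩo : IsOpen Ω) (hΩb : Bornology.IsBounded Ω)
    (β C : ℝ) (hβ : β ∈ Set.Ioc (-1 : ℝ) 0) (hC : 0 < C)
    (G : EuclideanSpace ℝ (Fin N) → EuclideanSpace ℝ (Fin N) → ℝ)
    (hGnn : ∀ x y, 0 ≤ G x y)
    (hG : ∀ x ∈ Ω, ∀ y ∈ Ω, x ≠ y →
      G x y ≤ C * min 1 (Metric.infDist x (frontier Ω) * Metric.infDist y (frontier Ω)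
        / dist x y ^ 2) * dist x y ^ (2 - (N : ℝ))) :
    ∃ c > 0, ∀ x ∈ Ω,
      ∫ y in {y ∈ Ω | 2 * dist x y ≤ Metric.infDist y (frontier Ω)},
          G x y * Metric.infDist y (frontier Ω) ^ β
        ≤ c * Metric.infDist x (frontier Ω) := by
  haveI : Nonempty (Fin N) := ⟨⟨0, by omega⟩⟩
  haveI : Nontrivial (EuclideanSpace ℝ (Fin N)) := by infer_instance
  have hN3 : (3:ℝ) ≤ (N:ℝ) := by exact_mod_cast hN
  set a : ℝ := 2 - (N:ℝ) + β with ha_def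
  have haN : -(N:ℝ) < a := by simp only [ha_def]; linarith [hβ.1]
  have ha0 : a < 0 := by simp only [ha_def]; linarith [hβ.2]
  obtain ⟨K, hKpos, hK⟩ := aux_ball_rpow_center N hN a haN ha0
  -- bound on Ω
  obtain ⟨r, hr⟩ := hΩb.subset_closedBall 0
  set D : ℝ := 2 * max r 0 + 1 with hD_def
  have hDpos : (0:ℝ) < D := by positivity
  set c : ℝ := C * 2 ^ β * K * 2 ^ (2 + β) * D ^ (1 + β) with hc_def
  have h2b : (0:ℝ) < (2:ℝ) ^ β := Real.rpow_pos_of_pos two_pos β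
  have h2b2 : (0:ℝ) < (2:ℝ) ^ (2 + β) := Real.rpow_pos_of_pos two_pos _
  have hDb : (0:ℝ) < D ^ (1 + β) := Real.rpow_pos_of_pos hDpos _
  refine ⟨c, by positivity, fun x hx => ?_⟩
  -- frontier is nonempty
  have hfr : (frontier Ω).Nonempty := by
    rcases eq_empty_or_nonempty (frontier Ω) with h | h
    · exfalso
      rcases isClopen_iff.1 (isClopen_iff_frontier_eq_empty.2 h) with h0 | h0
      · exact absurd h0 (Set.nonempty_iff_ne_empty.1 ⟨x, hx⟩)
      · exact NormedSpace.unbounded_univ ℝ (EuclideanSpace ℝ (Fin N)) (h0 ▸ hΩb)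
    · exact h
  set dx : ℝ := Metric.infDist x (frontier Ω) with hdx_def
  have hxfr : x ∉ frontier Ω := fun h => (hΩo.frontier_eq ▸ h).2 hx
  have hdx : 0 < dx := (isClosed_frontier.notMem_iff_infDist_pos hfr).1 hxfr
  have hdxD : dx ≤ D := by
    obtain ⟨z, hz⟩ := hfr
    have h1 : dx ≤ dist x z := Metric.infDist_le_dist_of_mem hz
    have h2 : dist x z ≤ ‖x‖ + ‖z‖ := by
      calc dist x z ≤ dist x 0 + dist 0 z := dist_triangle _ _ _
        _ = ‖x‖ + ‖z‖ := by simp [dist_eq_norm]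
    have hxr : ‖x‖ ≤ max r 0 := by
      have := hr hx
      rw [Metric.mem_closedBall, dist_zero_right] at this
      exact this.trans (le_max_left r 0)
    have hzr : ‖z‖ ≤ max r 0 := by
      have hz' : z ∈ closure Ω := hz.1
      have : z ∈ Metric.closedBall (0:EuclideanSpace ℝ (Fin N)) r := (closure_minimal hr Metric.isClosed_closedBall) hz'
      rw [Metric.mem_closedBall, dist_zero_right] at this
      exact this.trans (le_max_left r 0)
    simp only [hD_def]; linarith
  set S : Set (EuclideanSpace ℝ (Fin N)) := {y ∈ Ω | 2 * dist x y ≤ Metric.infDist y (frontier Ω)} with hS_def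
  have hSm : MeasurableSet S := by
    have h1 : Continuous fun y : EuclideanSpace ℝ (Fin N) => 2 * dist x y :=
      continuous_const.mul (continuous_const.dist continuous_id)
    have h2 : Continuous fun y : EuclideanSpace ℝ (Fin N) => Metric.infDist y (frontier Ω) :=
      Metric.continuous_infDist_pt _
    exact hΩo.measurableSet.inter (measurableSet_le h1.measurable h2.measurable)
  have hSsub : S ⊆ Metric.ball x (2 * dx) := by
    rintro y ⟨hyΩ, hy2⟩
    have h1 : Metric.infDist y (frontier Ω) ≤ dx + dist y x :=
      Metric.infDist_le_infDist_add_dist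
    have h2 : dist x y ≤ dx := by rw [dist_comm y x] at h1; linarith
    rw [Metric.mem_ball, dist_comm]
    linarith
  obtain ⟨hintB, hleB⟩ := hK x (2 * dx) (by positivity)
  have hintS : IntegrableOn (fun y => C * 2 ^ β * dist x y ^ a) S volume :=
    ((hintB.mono_set hSsub).const_mul _)
  -- a.e. pointwise bound
  have hae : ∀ᵐ y ∂(volume.restrict S),
      G x y * Metric.infDist y (frontier Ω) ^ β ≤ C * 2 ^ β * dist x y ^ a := by
    have hxnull : ∀ᵐ y ∂(volume.restrict S), y ≠ x := by
      apply ae_restrict_of_ae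
      have h := Set.Countable.ae_notMem (Set.countable_singleton x)
        (volume : Measure (EuclideanSpace ℝ (Fin N)))
      simpa using h
    filter_upwards [hxnull, ae_restrict_mem hSm] with y hyx hyS
    have hxy : x ≠ y := Ne.symm hyx
    have hdist : 0 < dist x y := dist_pos.2 hxy
    have hdy : 2 * dist x y ≤ Metric.infDist y (frontier Ω) := hyS.2
    have hdy0 : 0 < Metric.infDist y (frontier Ω) := lt_of_lt_of_le (by linarith) hdy
    have hGxy : G x y ≤ C * dist x y ^ (2 - (N:ℝ)) := by
      calc G x y ≤ C * min 1 (dx * Metric.infDist y (frontier Ω) / dist x y ^ 2)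
          * dist x y ^ (2 - (N:ℝ)) := hG x hx y hyS.1 hxy
        _ ≤ C * 1 * dist x y ^ (2 - (N:ℝ)) := by
            have := Real.rpow_nonneg hdist.le (2 - (N:ℝ))
            gcongr
            exact min_le_left _ _
        _ = C * dist x y ^ (2 - (N:ℝ)) := by ring
    have hβd : Metric.infDist y (frontier Ω) ^ β ≤ (2 * dist x y) ^ β :=
      Real.rpow_le_rpow_of_nonpos (by positivity) hdy hβ.2
    calc G x y * Metric.infDist y (frontier Ω) ^ β
        ≤ (C * dist x y ^ (2 - (N:ℝ))) * ((2 * dist x y) ^ β) := by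
          apply mul_le_mul hGxy hβd (Real.rpow_nonneg Metric.infDist_nonneg β) (by positivity)
      _ = C * 2 ^ β * dist x y ^ a := by
          rw [Real.mul_rpow (by norm_num) hdist.le, ha_def,
            show (2:ℝ) - (N:ℝ) + β = (2 - (N:ℝ)) + β from rfl, Real.rpow_add hdist]
          ring
  -- main chain
  have hnn : 0 ≤ᵐ[volume.restrict S] fun y => G x y * Metric.infDist y (frontier Ω) ^ β :=
    Filter.Eventually.of_forall fun y =>
      mul_nonneg (hGnn x y) (Real.rpow_nonneg Metric.infDist_nonneg β)
  have step1 : ∫ y in S, G x y * Metric.infDist y (frontier Ω) ^ β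
      ≤ ∫ y in S, C * 2 ^ β * dist x y ^ a :=
    integral_mono_of_nonneg hnn hintS hae
  have step2 : ∫ y in S, C * 2 ^ β * dist x y ^ a
      = C * 2 ^ β * ∫ y in S, dist x y ^ a := integral_const_mul _ _
  have step3 : ∫ y in S, dist x y ^ a ≤ ∫ y in Metric.ball x (2 * dx), dist x y ^ a :=
    setIntegral_mono_set hintB
      (Filter.Eventually.of_forall fun y => Real.rpow_nonneg dist_nonneg a)
      (HasSubset.Subset.eventuallyLE hSsub)
  have hNa2 : (N:ℝ) + a = 2 + β := by simp only [ha_def]; ring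
  have step4 : ∫ y in Metric.ball x (2 * dx), dist x y ^ a ≤ K * (2 * dx) ^ (2 + β) := by
    rw [← hNa2]; exact hleB
  have step5 : K * (2 * dx) ^ (2 + β) ≤ K * (2 ^ (2 + β) * (D ^ (1 + β) * dx)) := by
    have h1 : (2 * dx) ^ (2 + β) = 2 ^ (2 + β) * dx ^ (2 + β) :=
      Real.mul_rpow (by norm_num) hdx.le
    have h2 : dx ^ (2 + β) = dx ^ (1 + β) * dx := by
      rw [show (2:ℝ) + β = (1 + β) + 1 by ring, Real.rpow_add hdx, Real.rpow_one]
    have h3 : dx ^ (1 + β) ≤ D ^ (1 + β) :=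
      Real.rpow_le_rpow hdx.le hdxD (by linarith [hβ.1])
    rw [h1, h2]
    have : dx ^ (1 + β) * dx ≤ D ^ (1 + β) * dx := by
      apply mul_le_mul_of_nonneg_right h3 hdx.le
    exact mul_le_mul_of_nonneg_left (mul_le_mul_of_nonneg_left this h2b2.le) hKpos.le
  calc ∫ y in S, G x y * Metric.infDist y (frontier Ω) ^ β
      ≤ C * 2 ^ β * ∫ y in S, dist x y ^ a := by rw [← step2]; exact step1
    _ ≤ C * 2 ^ β * (K * (2 ^ (2 + β) * (D ^ (1 + β) * dx))) := by
        have := le_trans (le_trans step3 step4) step5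
        have hC2 : (0:ℝ) ≤ C * 2 ^ β := by positivity
        calc C * 2 ^ β * ∫ y in S, dist x y ^ a
            ≤ C * 2 ^ β * (K * (2 * dx) ^ (2 + β)) := by
              apply mul_le_mul_of_nonneg_left (le_trans step3 step4) hC2
          _ ≤ C * 2 ^ β * (K * (2 ^ (2 + β) * (D ^ (1 + β) * dx))) :=
              mul_le_mul_of_nonneg_left step5 hC2
    _ = c * dx := by rw [hc_def]; ring
end

section
/- Let N ≥ 3, Ω ⊂ ℝ^N a bounded open set with d(x) = dist(x, ∂Ω), let −1 < β ≤ 0, and let G : Ω × Ω → [0,∞) satisfy G(x,y) ≤ C min{1, d(x)d(y)/|x−y|^2} |x−y|^{2−N}. Then there exists a constant c > 0 such that for every x ∈ Ω, ∫_{{y ∈ Ω : d(y) ≤ 2|x−y|}} G(x,y) d(y)^β dy ≤ c · d(x). -/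
open MeasureTheory Metric Set Real
open scoped ENNReal

lemma aux_integrableOn_rpow_ball {N : ℕ} (hN : 0 < N) {p : ℝ} (hpN : -(N : ℝ) < p)
    (hp : p < 0) (D : ℝ) :
    IntegrableOn (fun y : EuclideanSpace ℝ (Fin N) => ‖y‖ ^ p) (Metric.ball 0 D) := by
  set E := EuclideanSpace ℝ (Fin N)
  have hmeas : Measurable fun y : E => ‖y‖ ^ p := by fun_prop
  constructor
  · exact hmeas.aestronglyMeasurable
  · set μr := volume.restrict (Metric.ball (0 : E) D) with hμr
    rw [HasFiniteIntegral,
      lintegral_enorm_of_nonneg (fun a => Real.rpow_nonneg (norm_nonneg a) p),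
      lintegral_eq_lintegral_meas_le μr
        (Filter.Eventually.of_forall fun a => Real.rpow_nonneg (norm_nonneg a) p)
        hmeas.aemeasurable]
    set mB := volume (Metric.ball (0 : E) 1) with hmB
    have hq : (N : ℝ) * p⁻¹ < -1 := by
      rw [← div_eq_mul_inv, div_lt_iff_of_neg hp]
      linarith
    calc
      ∫⁻ t in Ioi (0 : ℝ), μr {a : E | t ≤ ‖a‖ ^ p}
          ≤ ∫⁻ t in Ioc (0 : ℝ) 1 ∪ Ioi 1, μr {a : E | t ≤ ‖a‖ ^ p} :=
        lintegral_mono_set Ioi_subset_Ioc_union_Ioi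
      _ ≤ (∫⁻ t in Ioc (0 : ℝ) 1, μr {a : E | t ≤ ‖a‖ ^ p})
          + ∫⁻ t in Ioi (1 : ℝ), μr {a : E | t ≤ ‖a‖ ^ p} := lintegral_union_le _ _ _
      _ < ∞ := by
        refine ENNReal.add_lt_top.2 ⟨?_, ?_⟩
        · calc
            ∫⁻ t in Ioc (0 : ℝ) 1, μr {a : E | t ≤ ‖a‖ ^ p}
                ≤ ∫⁻ _ in Ioc (0 : ℝ) 1, volume (Metric.ball (0 : E) D) := by
              refine lintegral_mono fun t => ?_
              calc μr {a : E | t ≤ ‖a‖ ^ p} ≤ μr univ := measure_mono (subset_univ _)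
                _ = volume (Metric.ball (0 : E) D) := Measure.restrict_apply_univ _
            _ = volume (Metric.ball (0 : E) D) * volume (Ioc (0 : ℝ) 1) := by
              rw [lintegral_const, Measure.restrict_apply_univ]
            _ < ∞ := ENNReal.mul_lt_top measure_ball_lt_top (by simp)
        · have key : ∀ t ∈ Ioi (1 : ℝ),
              μr {a : E | t ≤ ‖a‖ ^ p}
                ≤ ENNReal.ofReal (t ^ ((N : ℝ) * p⁻¹) * mB.toReal) := by
            intro t ht
            have ht1 : (1 : ℝ) < t := ht
            have ht0 : (0 : ℝ) < t := lt_trans zero_lt_one ht1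
            have hsub : {a : E | t ≤ ‖a‖ ^ p} ⊆ Metric.closedBall 0 (t ^ p⁻¹) := by
              intro a ha
              have ha' : t ≤ ‖a‖ ^ p := ha
              have hna : 0 < ‖a‖ := by
                rcases (norm_nonneg a).lt_or_eq with h | h
                · exact h
                · exfalso
                  rw [← h, Real.zero_rpow hp.ne] at ha'
                  linarith
              have : (‖a‖ ^ p) ^ p⁻¹ ≤ t ^ p⁻¹ :=
                Real.rpow_le_rpow_of_nonpos ht0 ha' (inv_nonpos.2 hp.le)
              rw [Real.rpow_rpow_inv (norm_nonneg a) hp.ne] at this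
              simpa [Metric.mem_closedBall, dist_eq_norm] using this
            have hvol : volume (Metric.closedBall (0 : E) (t ^ p⁻¹))
                = ENNReal.ofReal (t ^ ((N : ℝ) * p⁻¹)) * mB := by
              rw [Measure.addHaar_closedBall _ _ (Real.rpow_nonneg ht0.le _)]
              congr 2
              rw [finrank_euclideanSpace_fin, ← Real.rpow_natCast (t ^ p⁻¹) N,
                ← Real.rpow_mul ht0.le, mul_comm]
            calc
              μr {a : E | t ≤ ‖a‖ ^ p} ≤ volume {a : E | t ≤ ‖a‖ ^ p} :=
                Measure.le_iff'.1 Measure.restrict_le_self _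
              _ ≤ volume (Metric.closedBall (0 : E) (t ^ p⁻¹)) := measure_mono hsub
              _ = ENNReal.ofReal (t ^ ((N : ℝ) * p⁻¹)) * mB := hvol
              _ = ENNReal.ofReal (t ^ ((N : ℝ) * p⁻¹) * mB.toReal) := by
                rw [ENNReal.ofReal_mul (Real.rpow_nonneg ht0.le _),
                  ENNReal.ofReal_toReal measure_ball_lt_top.ne]
          calc
            ∫⁻ t in Ioi (1 : ℝ), μr {a : E | t ≤ ‖a‖ ^ p}
                ≤ ∫⁻ t in Ioi (1 : ℝ),
                    ENNReal.ofReal (t ^ ((N : ℝ) * p⁻¹) * mB.toReal) :=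
              setLIntegral_mono' measurableSet_Ioi key
            _ < ∞ := by
              refine IntegrableOn.setLIntegral_lt_top ?_
              exact (integrableOn_Ioi_rpow_of_lt hq zero_lt_one).mul_const _

theorem stmt7 {N : ℕ} (hN : 3 ≤ N) (Ω : Set (EuclideanSpace ℝ (Fin N)))
    (hΩo : IsOpen Ω) (hΩb : Bornology.IsBounded Ω)
    (β C : ℝ) (hβ : β ∈ Set.Ioc (-1 : ℝ) 0) (hC : 0 < C)
    (G : EuclideanSpace ℝ (Fin N) → EuclideanSpace ℝ (Fin N) → ℝ)
    (hGnn : ∀ x y, 0 ≤ G x y)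
    (hG : ∀ x ∈ Ω, ∀ y ∈ Ω, x ≠ y →
      G x y ≤ C * min 1 (Metric.infDist x (frontier Ω) * Metric.infDist y (frontier Ω)
        / dist x y ^ 2) * dist x y ^ (2 - (N : ℝ))) :
    ∃ c > 0, ∀ x ∈ Ω,
      ∫ y in {y ∈ Ω | Metric.infDist y (frontier Ω) ≤ 2 * dist x y},
          G x y * Metric.infDist y (frontier Ω) ^ β
        ≤ c * Metric.infDist x (frontier Ω) := by
  classical
  have hβ1 : -1 < β := hβ.1
  have hβ2 : β ≤ 0 := hβ.2
  have hN3 : (3 : ℝ) ≤ (N : ℝ) := by exact_mod_cast hN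
  have hNpos : 0 < N := by omega
  set p : ℝ := 1 + β - N with hp_def
  have hp_neg : p < 0 := by rw [hp_def]; linarith
  have hpN : -(N : ℝ) < p := by rw [hp_def]; linarith
  set D : ℝ := Metric.diam Ω + 1 with hD
  have hint0 : IntegrableOn (fun y : EuclideanSpace ℝ (Fin N) => ‖y‖ ^ p)
      (Metric.ball 0 D) := aux_integrableOn_rpow_ball hNpos hpN hp_neg D
  set κ : ℝ := ∫ z in Metric.ball (0 : EuclideanSpace ℝ (Fin N)) D, ‖z‖ ^ p with hκ
  have hκ0 : 0 ≤ κ :=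
    setIntegral_nonneg measurableSet_ball fun z _ => Real.rpow_nonneg (norm_nonneg z) p
  refine ⟨2 * C * κ + 1, by positivity, ?_⟩
  intro x hx
  set dx := Metric.infDist x (frontier Ω) with hdx
  have hdx0 : 0 ≤ dx := Metric.infDist_nonneg
  have hind : (fun y : EuclideanSpace ℝ (Fin N) =>
      Set.indicator (Metric.ball (0 : EuclideanSpace ℝ (Fin N)) D)
        (fun z => ‖z‖ ^ p) (y - x))
      = Set.indicator (Metric.ball x D) (fun y => ‖y - x‖ ^ p) := by
    funext y
    by_cases h : y ∈ Metric.ball x D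
    · have h' : y - x ∈ Metric.ball (0 : EuclideanSpace ℝ (Fin N)) D := by
        simpa [Metric.mem_ball, dist_eq_norm] using h
      simp [h, h']
    · have h' : y - x ∉ Metric.ball (0 : EuclideanSpace ℝ (Fin N)) D := by
        simpa [Metric.mem_ball, dist_eq_norm] using h
      simp [h, h']
  have hint1 : IntegrableOn (fun y : EuclideanSpace ℝ (Fin N) => ‖y - x‖ ^ p)
      (Metric.ball x D) := by
    have h := ((integrable_indicator_iff measurableSet_ball).2 hint0).comp_sub_right x
    rw [hind] at h
    exact (integrable_indicator_iff measurableSet_ball).1 h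
  have heq : ∫ y in Metric.ball x D, ‖y - x‖ ^ p = κ := by
    rw [← integral_indicator measurableSet_ball, ← hind,
      integral_sub_right_eq_self
        (Set.indicator (Metric.ball (0 : EuclideanSpace ℝ (Fin N)) D) fun z => ‖z‖ ^ p) x,
      integral_indicator measurableSet_ball]
  set S := {y ∈ Ω | Metric.infDist y (frontier Ω) ≤ 2 * dist x y} with hS
  have hSm : MeasurableSet S := by
    have : S = Ω ∩ {y | Metric.infDist y (frontier Ω) ≤ 2 * dist x y} := rfl
    rw [this]
    exact hΩo.measurableSet.inter
      (measurableSet_le (Metric.continuous_infDist_pt (frontier Ω)).measurable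
        (continuous_const.mul (continuous_const.dist continuous_id)).measurable)
  have hSsub : S ⊆ Metric.ball x D := by
    intro y hy
    have h1 : dist y x ≤ Metric.diam Ω := Metric.dist_le_diam_of_mem hΩb hy.1 hx
    rw [Metric.mem_ball, hD]
    linarith
  haveI : Nonempty (Fin N) := ⟨⟨0, hNpos⟩⟩
  haveI : Nontrivial (EuclideanSpace ℝ (Fin N)) := inferInstance
  have hae_ne : ∀ᵐ y : EuclideanSpace ℝ (Fin N) ∂(volume.restrict S), y ≠ x := by
    refine ae_restrict_of_ae ?_
    rw [ae_iff]
    have : {y : EuclideanSpace ℝ (Fin N) | ¬ y ≠ x} = {x} := by ext z; simp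
    rw [this]
    exact measure_singleton x
  have hbound : ∀ y ∈ S, y ≠ x →
      G x y * Metric.infDist y (frontier Ω) ^ β ≤ (2 * C * dx) * ‖y - x‖ ^ p := by
    intro y hy hyx
    set dy := Metric.infDist y (frontier Ω) with hdy
    set r := dist x y with hr_def
    have hyΩ : y ∈ Ω := hy.1
    have hyd : dy ≤ 2 * r := hy.2
    have hxy : x ≠ y := fun h => hyx h.symm
    have hr : 0 < r := dist_pos.2 hxy
    have hdy0 : 0 ≤ dy := Metric.infDist_nonneg
    have hnorm : ‖y - x‖ = r := by rw [← dist_eq_norm, dist_comm, hr_def]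
    rw [hnorm]
    have hGle : G x y ≤ C * (dx * dy / r ^ 2) * r ^ (2 - (N : ℝ)) := by
      refine (hG x hx y hyΩ hxy).trans ?_
      gcongr
      exact min_le_right _ _
    have h1 : G x y * dy ^ β ≤ C * (dx * dy / r ^ 2) * r ^ (2 - (N : ℝ)) * dy ^ β :=
      mul_le_mul_of_nonneg_right hGle (Real.rpow_nonneg hdy0 β)
    have hdyb : dy * dy ^ β ≤ 2 * r ^ (1 + β) := by
      rcases eq_or_lt_of_le hdy0 with h0 | h0
      · rw [← h0, zero_mul]
        positivity
      · have hsplit : dy * dy ^ β = dy ^ (1 + β) := by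
          rw [Real.rpow_add h0, Real.rpow_one]
        rw [hsplit]
        calc dy ^ (1 + β) ≤ (2 * r) ^ (1 + β) :=
              Real.rpow_le_rpow hdy0 hyd (by linarith)
          _ = 2 ^ (1 + β) * r ^ (1 + β) := Real.mul_rpow (by norm_num) hr.le
          _ ≤ 2 * r ^ (1 + β) := by
              have h2 : (2:ℝ) ^ (1 + β) ≤ 2 ^ (1 : ℝ) :=
                Real.rpow_le_rpow_of_exponent_le one_le_two (by linarith)
              rw [Real.rpow_one] at h2
              exact mul_le_mul_of_nonneg_right h2 (Real.rpow_nonneg hr.le _)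
    have hfinal : r ^ (1 + β) * r ^ (2 - (N : ℝ)) / r ^ 2 = r ^ p := by
      rw [← Real.rpow_add hr, ← Real.rpow_natCast r 2, ← Real.rpow_sub hr]
      congr 1
      rw [hp_def]; push_cast; ring
    calc G x y * dy ^ β ≤ C * (dx * dy / r ^ 2) * r ^ (2 - (N : ℝ)) * dy ^ β := h1
      _ = C * dx * ((dy * dy ^ β) * (r ^ (2 - (N : ℝ)) / r ^ 2)) := by ring
      _ ≤ C * dx * ((2 * r ^ (1 + β)) * (r ^ (2 - (N : ℝ)) / r ^ 2)) := by
          have hA : 0 ≤ r ^ (2 - (N : ℝ)) / r ^ 2 := by positivity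
          have hCdx : 0 ≤ C * dx := mul_nonneg hC.le hdx0
          exact mul_le_mul_of_nonneg_left (mul_le_mul_of_nonneg_right hdyb hA) hCdx
      _ = 2 * C * dx * r ^ p := by rw [← hfinal]; ring
  have hfnn : 0 ≤ᵐ[volume.restrict S]
      fun y => G x y * Metric.infDist y (frontier Ω) ^ β :=
    Filter.Eventually.of_forall fun y =>
      mul_nonneg (hGnn x y) (Real.rpow_nonneg Metric.infDist_nonneg β)
  have hgint0 : IntegrableOn (fun y => (2 * C * dx) * ‖y - x‖ ^ p) (Metric.ball x D) :=
    hint1.const_mul _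
  have hgint : Integrable (fun y => (2 * C * dx) * ‖y - x‖ ^ p) (volume.restrict S) :=
    hgint0.mono_set hSsub
  have hfg : (fun y => G x y * Metric.infDist y (frontier Ω) ^ β)
      ≤ᵐ[volume.restrict S] fun y => (2 * C * dx) * ‖y - x‖ ^ p := by
    filter_upwards [ae_restrict_mem hSm, hae_ne] with y hyS hyx
    exact hbound y hyS hyx
  calc ∫ y in S, G x y * Metric.infDist y (frontier Ω) ^ β
      ≤ ∫ y in S, (2 * C * dx) * ‖y - x‖ ^ p := integral_mono_of_nonneg hfnn hgint hfg
    _ = (2 * C * dx) * ∫ y in S, ‖y - x‖ ^ p := integral_const_mul _ _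
    _ ≤ (2 * C * dx) * κ := by
        have hmono : ∫ y in S, ‖y - x‖ ^ p ≤ ∫ y in Metric.ball x D, ‖y - x‖ ^ p :=
          setIntegral_mono_set hint1
            (Filter.Eventually.of_forall fun y => Real.rpow_nonneg (norm_nonneg _) p)
            (HasSubset.Subset.eventuallyLE hSsub)
        rw [heq] at hmono
        exact mul_le_mul_of_nonneg_left hmono (by positivity)
    _ ≤ (2 * C * κ + 1) * dx := by nlinarith
end

section
/- Let N ≥ 3, Ω ⊂ ℝ^N a bounded open set with d(x) = dist(x, ∂Ω), let β > −1, and let G : Ω × Ω → [0,∞) satisfy G(x,y) ≤ C min{1, d(x)d(y)/|x−y|^2} |x−y|^{2−N} for all x ≠ y. Define ψ(x) = ∫_Ω G(x,y) d(y)^β dy. Then there exists c > 0 depending only on β, C, N and diam(Ω) such that 0 ≤ ψ(x) ≤ c d(x) for every x ∈ Ω. -/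
open MeasureTheory Metric Set
open scoped ENNReal NNReal

lemma aux_ball_int {N : ℕ} (hN : 3 ≤ N) {t : ℝ} (htl : -(N : ℝ) < t) (htu : t < 0) :
    ∃ K > 0, ∀ (x : EuclideanSpace ℝ (Fin N)) (ρ : ℝ), 0 < ρ →
      IntegrableOn (fun y => dist x y ^ t) (ball x ρ) volume ∧
      ∫ y in ball x ρ, dist x y ^ t ≤ K * ρ ^ ((N : ℝ) + t) := by
  haveI : Nonempty (Fin N) := ⟨⟨0, by omega⟩⟩
  haveI : Nontrivial (EuclideanSpace ℝ (Fin N)) := inferInstance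
  set E := EuclideanSpace ℝ (Fin N)
  set q : ℝ := 1/2 with hqdef
  have hq0 : (0:ℝ) < q := by norm_num
  have hq1 : q < 1 := by norm_num
  have hNt : (0:ℝ) < (N:ℝ) + t := by linarith
  set a : ℝ := q ^ ((N:ℝ) + t) with hadef
  have ha0 : 0 < a := Real.rpow_pos_of_pos hq0 _
  have ha1 : a < 1 := Real.rpow_lt_one hq0.le hq1 hNt
  set V : ℝ := (volume (ball (0:E) 1)).toReal with hVdef
  have hV : 0 < V :=
    ENNReal.toReal_pos (measure_ball_pos volume 0 one_pos).ne' measure_ball_lt_top.ne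
  have hinva : (0:ℝ) < (1-a)⁻¹ := inv_pos.2 (by linarith)
  have hKpos : (0:ℝ) < q ^ t * (1-a)⁻¹ * V :=
    mul_pos (mul_pos (Real.rpow_pos_of_pos hq0 t) hinva) hV
  refine ⟨q ^ t * (1-a)⁻¹ * V, hKpos, fun x ρ hρ => ?_⟩
  set f : E → ℝ := fun y => dist x y ^ t with hfdef
  have hfm : Measurable f := (measurable_const.dist measurable_id).pow measurable_const
  have hfnn : ∀ y, 0 ≤ f y := fun y => Real.rpow_nonneg dist_nonneg _
  set S : ℕ → Set E := fun k => closedBall x (ρ * q^k) \ ball x (ρ * q^(k+1)) with hSdef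
  have hcover : ball x ρ ⊆ {x} ∪ ⋃ k, S k := by
    intro y hy
    rcases eq_or_ne y x with h | h
    · exact Or.inl (by simp [h])
    · right
      have hr0 : 0 < dist y x := dist_pos.2 h
      have hrρ : dist y x < ρ := mem_ball.1 hy
      have hP : ∃ n : ℕ, ρ * q^(n+1) ≤ dist y x := by
        obtain ⟨n, hn⟩ := exists_pow_lt_of_lt_one (div_pos hr0 hρ) hq1
        refine ⟨n, ?_⟩
        have h1 : q^n * ρ < dist y x := (lt_div_iff₀ hρ).1 hn
        have h2 : q^(n+1) ≤ q^n := pow_le_pow_of_le_one hq0.le hq1.le (by omega)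
        nlinarith
      classical
      set k := Nat.find hP with hk
      have hk1 : ρ * q^(k+1) ≤ dist y x := Nat.find_spec hP
      have hk2 : dist y x ≤ ρ * q^k := by
        rcases Nat.eq_zero_or_pos k with h0 | h0
        · simpa [h0] using hrρ.le
        · have := Nat.find_min hP (m := k - 1) (by omega)
          push_neg at this
          have hkk : k - 1 + 1 = k := by omega
          rw [hkk] at this
          exact this.le
      exact mem_iUnion.2 ⟨k, ⟨mem_closedBall.2 hk2, fun hc => absurd (mem_ball.1 hc) (not_lt.2 hk1)⟩⟩
  have hterm : ∀ k : ℕ, ∫⁻ y in S k, ENNReal.ofReal (f y) ≤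
      ENNReal.ofReal (q ^ t * ρ ^ ((N:ℝ)+t) * a^k) * volume (ball (0:E) 1) := by
    intro k
    have hrk : 0 < ρ * q^(k+1) := by positivity
    have hbound : ∀ y ∈ S k, ENNReal.ofReal (f y) ≤ ENNReal.ofReal ((ρ * q^(k+1)) ^ t) := by
      intro y hy
      refine ENNReal.ofReal_le_ofReal ?_
      have h1 : ρ * q^(k+1) ≤ dist x y := by
        rw [dist_comm]
        exact not_lt.1 fun hc => hy.2 (mem_ball.2 hc)
      exact Real.rpow_le_rpow_of_nonpos hrk h1 htu.le
    have hSmeas : MeasurableSet (S k) := measurableSet_closedBall.diff measurableSet_ball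
    calc ∫⁻ y in S k, ENNReal.ofReal (f y)
        ≤ ∫⁻ _y in S k, ENNReal.ofReal ((ρ * q^(k+1)) ^ t) :=
          lintegral_mono_ae ((ae_restrict_iff' hSmeas).2 (Filter.Eventually.of_forall hbound))
      _ = ENNReal.ofReal ((ρ * q^(k+1)) ^ t) * volume (S k) := setLIntegral_const _ _
      _ ≤ ENNReal.ofReal ((ρ * q^(k+1)) ^ t) * volume (closedBall x (ρ * q^k)) := by
          exact mul_le_mul_right (measure_mono diff_subset) _
      _ = ENNReal.ofReal ((ρ * q^(k+1)) ^ t) * (ENNReal.ofReal ((ρ * q^k) ^ N) * volume (ball (0:E) 1)) := by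
          rw [Measure.addHaar_closedBall _ _ (by positivity), finrank_euclideanSpace_fin]
      _ = ENNReal.ofReal (q ^ t * ρ ^ ((N:ℝ)+t) * a^k) * volume (ball (0:E) 1) := by
          rw [← mul_assoc, ← ENNReal.ofReal_mul (by positivity)]
          congr 2
          have e1 : (ρ * q^(k+1)) ^ t = ρ ^ t * q ^ (((k:ℝ)+1) * t) := by
            rw [Real.mul_rpow hρ.le (by positivity), ← Real.rpow_natCast q (k+1),
              ← Real.rpow_mul hq0.le]
            push_cast
            ring_nf
          have e2 : (ρ * q^k) ^ N = ρ ^ (N:ℝ) * q ^ ((k:ℝ) * N) := by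
            rw [mul_pow, ← Real.rpow_natCast (ρ) N, ← Real.rpow_natCast (q^k) N,
              ← Real.rpow_natCast q k, ← Real.rpow_mul hq0.le]
          have e3 : a ^ k = q ^ (((N:ℝ)+t) * k) := by
            rw [hadef, ← Real.rpow_natCast (q ^ ((N:ℝ)+t)) k, ← Real.rpow_mul hq0.le]
          rw [e1, e2, e3]
          simp only [Real.rpow_def_of_pos hρ, Real.rpow_def_of_pos hq0, ← Real.exp_add]
          congr 1
          push_cast
          ring
  have hmain : ∫⁻ y in ball x ρ, ENNReal.ofReal (f y) ≤
      ENNReal.ofReal (q ^ t * (1-a)⁻¹ * V * ρ ^ ((N:ℝ)+t)) := by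
    calc ∫⁻ y in ball x ρ, ENNReal.ofReal (f y)
        ≤ ∫⁻ y in {x} ∪ ⋃ k, S k, ENNReal.ofReal (f y) := lintegral_mono_set hcover
      _ ≤ (∫⁻ y in ({x} : Set E), ENNReal.ofReal (f y)) + ∫⁻ y in ⋃ k, S k, ENNReal.ofReal (f y) :=
          lintegral_union_le _ _ _
      _ = ∫⁻ y in ⋃ k, S k, ENNReal.ofReal (f y) := by
          rw [Measure.restrict_eq_zero.2 (measure_singleton x), lintegral_zero_measure, zero_add]
      _ ≤ ∑' k, ∫⁻ y in S k, ENNReal.ofReal (f y) := lintegral_iUnion_le _ _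
      _ ≤ ∑' k, ENNReal.ofReal (q ^ t * ρ ^ ((N:ℝ)+t) * a^k) * volume (ball (0:E) 1) :=
          ENNReal.tsum_le_tsum hterm
      _ = (∑' k, ENNReal.ofReal (q ^ t * ρ ^ ((N:ℝ)+t)) * (ENNReal.ofReal a)^k) * volume (ball (0:E) 1) := by
          rw [ENNReal.tsum_mul_right]
          congr 1
          refine tsum_congr fun k => ?_
          rw [ENNReal.ofReal_mul (by positivity), ENNReal.ofReal_pow ha0.le]
      _ = ENNReal.ofReal (q ^ t * ρ ^ ((N:ℝ)+t)) * (1 - ENNReal.ofReal a)⁻¹ * volume (ball (0:E) 1) := by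
          rw [ENNReal.tsum_mul_left, ENNReal.tsum_geometric]
      _ = ENNReal.ofReal (q ^ t * (1-a)⁻¹ * V * ρ ^ ((N:ℝ)+t)) := by
          have ha' : (1 : ℝ≥0∞) - ENNReal.ofReal a = ENNReal.ofReal (1-a) := by
            rw [ENNReal.ofReal_sub _ ha0.le, ENNReal.ofReal_one]
          have hv' : volume (ball (0:E) 1) = ENNReal.ofReal V := by
            rw [hVdef, ENNReal.ofReal_toReal measure_ball_lt_top.ne]
          rw [ha', ← ENNReal.ofReal_inv_of_pos (by linarith), hv',
            ← ENNReal.ofReal_mul (by positivity),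
            ← ENNReal.ofReal_mul (mul_nonneg (mul_nonneg (Real.rpow_nonneg hq0.le t)
              (Real.rpow_nonneg hρ.le _)) hinva.le)]
          congr 1
          ring
  have hint : IntegrableOn f (ball x ρ) volume := by
    refine ⟨hfm.aestronglyMeasurable.restrict, ?_⟩
    rw [hasFiniteIntegral_iff_ofReal (Filter.Eventually.of_forall hfnn)]
    exact lt_of_le_of_lt hmain ENNReal.ofReal_lt_top
  refine ⟨hint, ?_⟩
  rw [integral_eq_lintegral_of_nonneg_ae (Filter.Eventually.of_forall hfnn)
    hfm.aestronglyMeasurable.restrict]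
  exact ENNReal.toReal_le_of_le_ofReal
    (mul_nonneg hKpos.le (Real.rpow_nonneg hρ.le _)) hmain

theorem stmt8 {N : ℕ} (hN : 3 ≤ N) (Ω : Set (EuclideanSpace ℝ (Fin N)))
    (hΩo : IsOpen Ω) (hΩb : Bornology.IsBounded Ω)
    (β C : ℝ) (hβ : -1 < β) (hC : 0 < C)
    (G : EuclideanSpace ℝ (Fin N) → EuclideanSpace ℝ (Fin N) → ℝ)
    (hGnn : ∀ x y, 0 ≤ G x y)
    (hG : ∀ x ∈ Ω, ∀ y ∈ Ω, x ≠ y →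
      G x y ≤ C * min 1 (Metric.infDist x (frontier Ω) * Metric.infDist y (frontier Ω)
        / dist x y ^ 2) * dist x y ^ (2 - (N : ℝ)))
    (ψ : EuclideanSpace ℝ (Fin N) → ℝ)
    (hψ : ∀ x, ψ x = ∫ y in Ω, G x y * Metric.infDist y (frontier Ω) ^ β) :
    ∃ c > 0, ∀ x ∈ Ω, 0 ≤ ψ x ∧ ψ x ≤ c * Metric.infDist x (frontier Ω) := by
  classical
  haveI : Nonempty (Fin N) := ⟨⟨0, by omega⟩⟩
  haveI : Nontrivial (EuclideanSpace ℝ (Fin N)) := inferInstance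
  rcases Set.eq_empty_or_nonempty Ω with hΩe | ⟨x₀, hx₀⟩
  · exact ⟨1, one_pos, fun x hx => by rw [hΩe] at hx; exact absurd hx (Set.notMem_empty x)⟩
  have hΩuniv : Ω ≠ Set.univ := fun h => NormedSpace.unbounded_univ ℝ _ (h ▸ hΩb)
  have hFne : (frontier Ω).Nonempty := by
    rw [Set.nonempty_iff_ne_empty]
    intro h
    rcases isClopen_iff.1 (isClopen_iff_frontier_eq_empty.2 h) with h' | h'
    · exact absurd h' (Set.Nonempty.ne_empty ⟨x₀, hx₀⟩)
    · exact hΩuniv h'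
  have hdpos : ∀ z ∈ Ω, 0 < Metric.infDist z (frontier Ω) := by
    intro z hz
    refine (isClosed_frontier.notMem_iff_infDist_pos hFne).1 ?_
    rw [hΩo.frontier_eq]
    exact fun hc => hc.2 hz
  obtain ⟨R₀, hR₀⟩ := hΩb.subset_closedBall 0
  set R : ℝ := max R₀ 0 with hRdef
  have hR0 : 0 ≤ R := le_max_right _ _
  have hΩR : Ω ⊆ closedBall 0 R := hR₀.trans (closedBall_subset_closedBall (le_max_left _ _))
  set D : ℝ := 2 * R + 1 with hDdef
  have hD : 0 < D := by linarith
  have hdistD : ∀ y ∈ closedBall (0 : EuclideanSpace ℝ (Fin N)) R,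
      ∀ z ∈ closedBall (0 : EuclideanSpace ℝ (Fin N)) R, dist y z ≤ 2 * R := by
    intro y hy z hz
    calc dist y z ≤ dist y 0 + dist 0 z := dist_triangle _ _ _
      _ ≤ R + R := add_le_add (mem_closedBall.1 hy) (by rw [dist_comm]; exact mem_closedBall.1 hz)
      _ = 2 * R := by ring
  have hFR : frontier Ω ⊆ closedBall 0 R := fun w hw =>
    closure_minimal hΩR Metric.isClosed_closedBall (frontier_subset_closure hw)
  have hdyD : ∀ y ∈ Ω, Metric.infDist y (frontier Ω) ≤ D := by
    intro y hy
    obtain ⟨w, hw⟩ := hFne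
    calc Metric.infDist y (frontier Ω) ≤ dist y w := Metric.infDist_le_dist_of_mem hw
      _ ≤ 2 * R := hdistD y (hΩR hy) w (hFR hw)
      _ ≤ D := by linarith
  have hΩball : ∀ x ∈ Ω, Ω ⊆ ball x D := by
    intro x hx y hy
    rw [mem_ball]
    calc dist y x ≤ 2 * R := hdistD y (hΩR hy) x (hΩR hx)
      _ < D := by linarith
  set s : ℝ := min 1 (1 + β) with hsdef
  have hs0 : 0 < s := lt_min one_pos (by linarith)
  have hs1 : s ≤ 1 := min_le_left _ _
  have hsβ : s ≤ 1 + β := min_le_right _ _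
  have hN3 : (3 : ℝ) ≤ (N : ℝ) := by exact_mod_cast hN
  obtain ⟨K1, hK1, hI1⟩ := aux_ball_int hN (t := 2 - (N : ℝ)) (by linarith) (by linarith)
  obtain ⟨K2, hK2, hI2⟩ := aux_ball_int hN (t := s - (N : ℝ)) (by linarith) (by linarith)
  have h2pow : (0:ℝ) < 2 ^ |β| := Real.rpow_pos_of_pos two_pos _
  have h3pow : (0:ℝ) < 3 ^ s := Real.rpow_pos_of_pos (by norm_num) _
  have hDβ1 : (0:ℝ) < D ^ (β + 1) := Real.rpow_pos_of_pos hD _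
  have hDβs : (0:ℝ) < D ^ (1 + β - s) := Real.rpow_pos_of_pos hD _
  have hDs : (0:ℝ) < D ^ s := Real.rpow_pos_of_pos hD _
  set c : ℝ := C * 2 ^ |β| * K1 * D ^ (β + 1) / 4 + C * 3 ^ s * D ^ (1 + β - s) * K2 * D ^ s
    with hcdef
  have hc : 0 < c := by
    have t1 : (0:ℝ) < C * 2 ^ |β| * K1 * D ^ (β + 1) / 4 := by
      apply div_pos; exact mul_pos (mul_pos (mul_pos hC h2pow) hK1) hDβ1; norm_num
    have t2 : (0:ℝ) < C * 3 ^ s * D ^ (1 + β - s) * K2 * D ^ s :=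
      mul_pos (mul_pos (mul_pos (mul_pos hC h3pow) hDβs) hK2) hDs
    rw [hcdef]
    linarith
  refine ⟨c, hc, fun x hx => ?_⟩
  set d : ℝ := Metric.infDist x (frontier Ω) with hddef
  have hd : 0 < d := hdpos x hx
  have hdD : d ≤ D := hdyD x hx
  have hd2 : 0 < d / 2 := by linarith
  constructor
  · rw [hψ x]
    exact setIntegral_nonneg hΩo.measurableSet fun y _ =>
      mul_nonneg (hGnn x y) (Real.rpow_nonneg Metric.infDist_nonneg _)
  set KA : ℝ := C * 2 ^ |β| * d ^ β with hKAdef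
  set KB : ℝ := C * 3 ^ s * D ^ (1 + β - s) * d with hKBdef
  have hKA : 0 < KA := mul_pos (mul_pos hC h2pow) (Real.rpow_pos_of_pos hd _)
  have hKB : 0 < KB := mul_pos (mul_pos (mul_pos hC h3pow) hDβs) hd
  have h1nn : ∀ y, (0:ℝ) ≤ dist x y ^ ((2:ℝ) - (N:ℝ)) := fun y => Real.rpow_nonneg dist_nonneg _
  have h2nn : ∀ y, (0:ℝ) ≤ dist x y ^ (s - (N:ℝ)) := fun y => Real.rpow_nonneg dist_nonneg _
  have hint1 : IntegrableOn (fun y => dist x y ^ ((2:ℝ) - (N:ℝ))) (ball x (d/2)) volume := by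
    have := (hI1 x (d/2) hd2).1
    simpa using this
  have hintA : IntegrableOn
      ((ball x (d/2)).indicator (fun y => dist x y ^ ((2:ℝ) - (N:ℝ)))) Ω volume :=
    (hint1.integrable_indicator measurableSet_ball).integrableOn
  have hint2 : IntegrableOn (fun y => dist x y ^ (s - (N:ℝ))) Ω volume :=
    (hI2 x D hD).1.mono_set (hΩball x hx)
  have hgint : IntegrableOn (fun y =>
      KA * (ball x (d/2)).indicator (fun z => dist x z ^ ((2:ℝ) - (N:ℝ))) y
        + KB * dist x y ^ (s - (N:ℝ))) Ω volume :=
    (hintA.const_mul KA).add (hint2.const_mul KB)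
  have hptae : ∀ᵐ y ∂(volume.restrict Ω),
      G x y * Metric.infDist y (frontier Ω) ^ β ≤
        KA * (ball x (d/2)).indicator (fun z => dist x z ^ ((2:ℝ) - (N:ℝ))) y
          + KB * dist x y ^ (s - (N:ℝ)) := by
    have hne : ∀ᵐ y ∂(volume.restrict Ω), y ≠ x := by
      refine ae_restrict_of_ae ?_
      rw [MeasureTheory.ae_iff]
      have hset : {a : EuclideanSpace ℝ (Fin N) | ¬ a ≠ x} = {x} := by ext a; simp
      rw [hset]
      exact measure_singleton x
    filter_upwards [ae_restrict_mem hΩo.measurableSet, hne] with y hyΩ hyx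
    have hxyne : x ≠ y := fun h => hyx h.symm
    have hr0 : 0 < dist x y := dist_pos.2 hxyne
    have hdy0 : 0 < Metric.infDist y (frontier Ω) := hdpos y hyΩ
    have hdyD' : Metric.infDist y (frontier Ω) ≤ D := hdyD y hyΩ
    set dy : ℝ := Metric.infDist y (frontier Ω) with hdydef
    set r : ℝ := dist x y with hrdef
    have hG' : G x y ≤ C * min 1 (d * dy / r ^ 2) * r ^ (2 - (N:ℝ)) := hG x hx y hyΩ hxyne
    have htri1 : dy ≤ d + r := by
      have h := Metric.infDist_le_infDist_add_dist (x := y) (y := x) (s := frontier Ω)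
      rw [dist_comm] at h
      exact h
    have htri2 : d ≤ dy + r := Metric.infDist_le_infDist_add_dist
    have hindnn : 0 ≤ (ball x (d/2)).indicator (fun z => dist x z ^ ((2:ℝ) - (N:ℝ))) y :=
      Set.indicator_nonneg (fun z _ => h1nn z) y
    rcases lt_or_ge r (d/2) with hcase | hcase
    · have hyA : y ∈ ball x (d/2) := by rw [mem_ball, dist_comm]; exact hcase
      have hmem : (ball x (d/2)).indicator (fun z => dist x z ^ ((2:ℝ) - (N:ℝ))) y
          = r ^ ((2:ℝ) - (N:ℝ)) := Set.indicator_of_mem hyA _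
      have hdy2 : dy ≤ 2 * d := by linarith
      have hdyhalf : d / 2 ≤ dy := by linarith
      have hβb : dy ^ β ≤ 2 ^ |β| * d ^ β := by
        rcases le_or_gt 0 β with hb | hb
        · have h2b : (2:ℝ) ^ β ≤ 2 ^ |β| :=
            Real.rpow_le_rpow_of_exponent_le one_le_two (le_abs_self β)
          calc dy ^ β ≤ (2 * d) ^ β := Real.rpow_le_rpow hdy0.le hdy2 hb
            _ = 2 ^ β * d ^ β := Real.mul_rpow (by norm_num) hd.le
            _ ≤ 2 ^ |β| * d ^ β := mul_le_mul_of_nonneg_right h2b (Real.rpow_nonneg hd.le β)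
        · have hle : dy ^ β ≤ (d / 2) ^ β :=
            Real.rpow_le_rpow_of_nonpos (by positivity) hdyhalf hb.le
          have he : (d / 2) ^ β = 2 ^ |β| * d ^ β := by
            rw [abs_of_neg hb, Real.div_rpow hd.le (by norm_num : (0:ℝ) ≤ 2),
              Real.rpow_neg (by norm_num : (0:ℝ) ≤ 2)]
            ring
          linarith
      have hGb : G x y ≤ C * r ^ (2 - (N:ℝ)) := by
        have hstep : C * min 1 (d * dy / r ^ 2) * r ^ (2 - (N:ℝ))
            ≤ C * 1 * r ^ (2 - (N:ℝ)) :=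
          mul_le_mul_of_nonneg_right (mul_le_mul_of_nonneg_left (min_le_left _ _) hC.le)
            (Real.rpow_nonneg dist_nonneg _)
        calc G x y ≤ _ := hG'
          _ ≤ C * 1 * r ^ (2 - (N:ℝ)) := hstep
          _ = C * r ^ (2 - (N:ℝ)) := by ring
      have hmain : G x y * dy ^ β ≤ KA * r ^ ((2:ℝ) - (N:ℝ)) := by
        calc G x y * dy ^ β ≤ (C * r ^ (2 - (N:ℝ))) * (2 ^ |β| * d ^ β) := by
              apply mul_le_mul hGb hβb (Real.rpow_nonneg hdy0.le β)
              positivity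
          _ = KA * r ^ ((2:ℝ) - (N:ℝ)) := by rw [hKAdef]; ring
      rw [hmem]
      have hKB2 : 0 ≤ KB * r ^ (s - (N:ℝ)) := mul_nonneg hKB.le (h2nn y)
      linarith
    · have hd2r : d ≤ 2 * r := by linarith
      have hdy3 : dy ≤ 3 * r := by linarith
      have hGb : G x y ≤ C * (d * dy) * r ^ (-(N:ℝ)) := by
        have h0 : C * min 1 (d * dy / r ^ 2) * r ^ (2 - (N:ℝ))
            ≤ C * (d * dy / r ^ 2) * r ^ (2 - (N:ℝ)) :=
          mul_le_mul_of_nonneg_right (mul_le_mul_of_nonneg_left (min_le_right _ _) hC.le)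
            (Real.rpow_nonneg dist_nonneg _)
        have hsplit2 : r ^ (2 - (N:ℝ)) = r ^ (2:ℝ) * r ^ (-(N:ℝ)) := by
          rw [show (2:ℝ) - (N:ℝ) = (2:ℝ) + -(N:ℝ) from by ring, Real.rpow_add hr0]
        have hr2 : r ^ (2:ℕ) = r ^ ((2:ℝ)) := by
          rw [← Real.rpow_natCast r 2]; norm_num
        have h1' : C * (d * dy / r ^ 2) * r ^ (2 - (N:ℝ)) = C * (d * dy) * r ^ (-(N:ℝ)) := by
          rw [hsplit2, hr2]
          have hrne : r ^ ((2:ℝ)) ≠ 0 := (Real.rpow_pos_of_pos hr0 _).ne'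
          field_simp
        calc G x y ≤ _ := hG'
          _ ≤ C * (d * dy / r ^ 2) * r ^ (2 - (N:ℝ)) := h0
          _ = C * (d * dy) * r ^ (-(N:ℝ)) := h1'
      have edy : dy ^ ((1:ℝ) + β) = dy * dy ^ β := by
        rw [Real.rpow_add hdy0, Real.rpow_one]
      have esplit : dy ^ ((1:ℝ) + β) = dy ^ s * dy ^ (1 + β - s) := by
        rw [← Real.rpow_add hdy0]
        ring_nf
      have hdys : dy ^ s ≤ 3 ^ s * r ^ s := by
        calc dy ^ s ≤ (3 * r) ^ s := Real.rpow_le_rpow hdy0.le hdy3 hs0.le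
          _ = 3 ^ s * r ^ s := Real.mul_rpow (by norm_num) hr0.le
      have hdyrest : dy ^ (1 + β - s) ≤ D ^ (1 + β - s) :=
        Real.rpow_le_rpow hdy0.le hdyD' (by linarith)
      have hdy1β : dy * dy ^ β ≤ 3 ^ s * r ^ s * D ^ (1 + β - s) := by
        rw [← edy, esplit]
        exact mul_le_mul hdys hdyrest (Real.rpow_nonneg hdy0.le _)
          (by positivity)
      have hrs : r ^ s * r ^ (-(N:ℝ)) = r ^ (s - (N:ℝ)) := by
        rw [← Real.rpow_add hr0]
        ring_nf
      have hmain : G x y * dy ^ β ≤ KB * r ^ (s - (N:ℝ)) := by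
        calc G x y * dy ^ β ≤ (C * (d * dy) * r ^ (-(N:ℝ))) * dy ^ β :=
              mul_le_mul_of_nonneg_right hGb (Real.rpow_nonneg hdy0.le β)
          _ = C * d * (dy * dy ^ β) * r ^ (-(N:ℝ)) := by ring
          _ ≤ C * d * (3 ^ s * r ^ s * D ^ (1 + β - s)) * r ^ (-(N:ℝ)) := by
              apply mul_le_mul_of_nonneg_right _ (Real.rpow_nonneg hr0.le _)
              exact mul_le_mul_of_nonneg_left hdy1β (by positivity)
          _ = KB * (r ^ s * r ^ (-(N:ℝ))) := by rw [hKBdef]; ring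
          _ = KB * r ^ (s - (N:ℝ)) := by rw [hrs]
      have hKA2 : 0 ≤ KA * (ball x (d/2)).indicator (fun z => dist x z ^ ((2:ℝ) - (N:ℝ))) y :=
        mul_nonneg hKA.le hindnn
      linarith
  have hψle : ψ x ≤ ∫ y in Ω,
      (KA * (ball x (d/2)).indicator (fun z => dist x z ^ ((2:ℝ) - (N:ℝ))) y
        + KB * dist x y ^ (s - (N:ℝ))) := by
    rw [hψ x]
    exact integral_mono_of_nonneg
      (Filter.Eventually.of_forall fun y =>
        mul_nonneg (hGnn x y) (Real.rpow_nonneg Metric.infDist_nonneg _))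
      hgint hptae
  have hsplit : ∫ y in Ω,
      (KA * (ball x (d/2)).indicator (fun z => dist x z ^ ((2:ℝ) - (N:ℝ))) y
        + KB * dist x y ^ (s - (N:ℝ)))
      = KA * (∫ y in Ω, (ball x (d/2)).indicator (fun z => dist x z ^ ((2:ℝ) - (N:ℝ))) y)
        + KB * (∫ y in Ω, dist x y ^ (s - (N:ℝ))) := by
    rw [integral_add (hintA.const_mul KA) (hint2.const_mul KB), integral_const_mul,
      integral_const_mul]
  have hI1b : ∫ y in Ω, (ball x (d/2)).indicator (fun z => dist x z ^ ((2:ℝ) - (N:ℝ))) y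
      ≤ K1 * (d/2) ^ ((N:ℝ) + (2 - (N:ℝ))) := by
    rw [setIntegral_indicator measurableSet_ball]
    calc ∫ y in Ω ∩ ball x (d/2), dist x y ^ ((2:ℝ) - (N:ℝ))
        ≤ ∫ y in ball x (d/2), dist x y ^ ((2:ℝ) - (N:ℝ)) :=
          setIntegral_mono_set hint1 (Filter.Eventually.of_forall h1nn)
            (HasSubset.Subset.eventuallyLE Set.inter_subset_right)
      _ ≤ K1 * (d/2) ^ ((N:ℝ) + (2 - (N:ℝ))) := by
          have := (hI1 x (d/2) hd2).2
          simpa using this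
  have hI2b : ∫ y in Ω, dist x y ^ (s - (N:ℝ)) ≤ K2 * D ^ ((N:ℝ) + (s - (N:ℝ))) := by
    calc ∫ y in Ω, dist x y ^ (s - (N:ℝ))
        ≤ ∫ y in ball x D, dist x y ^ (s - (N:ℝ)) :=
          setIntegral_mono_set (hI2 x D hD).1 (Filter.Eventually.of_forall h2nn)
            (HasSubset.Subset.eventuallyLE (hΩball x hx))
      _ ≤ K2 * D ^ ((N:ℝ) + (s - (N:ℝ))) := (hI2 x D hD).2
  have h22 : (2:ℝ) ^ (2:ℝ) = 4 := by
    have h2c : (2:ℝ) ^ (2:ℝ) = (2:ℝ) ^ (((2:ℕ)):ℝ) := by norm_num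
    rw [h2c, Real.rpow_natCast]
    norm_num
  have e1 : (d/2) ^ ((N:ℝ) + (2 - (N:ℝ))) = d ^ (2:ℝ) / 4 := by
    rw [show (N:ℝ) + (2 - (N:ℝ)) = 2 by ring,
      Real.div_rpow hd.le (by norm_num : (0:ℝ) ≤ 2), h22]
  have e2 : D ^ ((N:ℝ) + (s - (N:ℝ))) = D ^ s := by
    rw [show (N:ℝ) + (s - (N:ℝ)) = s by ring]
  have e3 : d ^ β * d ^ (2:ℝ) = d ^ (β + 1) * d := by
    rw [← Real.rpow_add hd, show β + (2:ℝ) = (β + 1) + 1 by ring,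
      Real.rpow_add_one hd.ne']
  have e4 : d ^ (β + 1) ≤ D ^ (β + 1) := Real.rpow_le_rpow hd.le hdD (by linarith)
  have hterm1 : KA * (K1 * ((d/2) ^ ((N:ℝ) + (2 - (N:ℝ)))))
      ≤ C * 2 ^ |β| * K1 * D ^ (β + 1) / 4 * d := by
    rw [e1]
    have hmul : d ^ β * d ^ (2:ℝ) ≤ D ^ (β + 1) * d := by
      rw [e3]; exact mul_le_mul_of_nonneg_right e4 hd.le
    have hnn : (0:ℝ) ≤ C * 2 ^ |β| * K1 / 4 :=
      div_nonneg (mul_nonneg (mul_nonneg hC.le h2pow.le) hK1.le) (by norm_num)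
    calc KA * (K1 * (d ^ (2:ℝ) / 4)) = C * 2 ^ |β| * K1 / 4 * (d ^ β * d ^ (2:ℝ)) := by
          rw [hKAdef]; ring
      _ ≤ C * 2 ^ |β| * K1 / 4 * (D ^ (β + 1) * d) := mul_le_mul_of_nonneg_left hmul hnn
      _ = C * 2 ^ |β| * K1 * D ^ (β + 1) / 4 * d := by ring
  have hterm2 : KB * (K2 * D ^ ((N:ℝ) + (s - (N:ℝ))))
      = C * 3 ^ s * D ^ (1 + β - s) * K2 * D ^ s * d := by
    rw [e2, hKBdef]; ring
  have hstep : ψ x ≤ KA * (K1 * ((d/2) ^ ((N:ℝ) + (2 - (N:ℝ)))))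
      + KB * (K2 * D ^ ((N:ℝ) + (s - (N:ℝ)))) := by
    rw [hsplit] at hψle
    exact hψle.trans (add_le_add (mul_le_mul_of_nonneg_left hI1b hKA.le)
      (mul_le_mul_of_nonneg_left hI2b hKB.le))
  have hcd : c * d = C * 2 ^ |β| * K1 * D ^ (β + 1) / 4 * d
      + C * 3 ^ s * D ^ (1 + β - s) * K2 * D ^ s * d := by
    rw [hcdef]; ring
  clear_value R D s c d KA KB
  linarith
end
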